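/- Let A ∈ ℝ^{2×2}, B ∈ ℝ^{2×1}, C ∈ ℝ^{1×2}, D ∈ ℝ, let P ∈ ℝ^{2×2} be symmetric, let ρ > 0 and μ, λ > 0, and suppose the 3×3 matrix [[AᵀPA − ρ²P, AᵀPB],[BᵀPA, BᵀPB]] + [[C, D],[0_{1×2}, 1]]ᵀ [[−λ, 1],[1, −μ]] [[C, D],[0_{1×2}, 1]] is negative semidefinite. Let φ, φ⋆ ∈ ℝ^{2n} and u, u⋆ ∈ ℝ^n, set y = (C ⊗ I_n)φ + D u and y⋆ = (C ⊗ I_n)φ⋆ + D u⋆, and suppose the quadratic constraint −λ‖y − y⋆‖² + 2⟨y − y⋆, u − u⋆⟩ − μ‖u − u⋆‖² ≥ 0 holds. If additionally (A ⊗ I_n)φ⋆ + (B ⊗ I_n)u⋆ = φ⋆, then with φ⁺ = (A ⊗ I_n)φ + (B ⊗ I_n)u one has (φ⁺ − φ⋆)ᵀ(P ⊗ I_n)(φ⁺ − φ⋆) ≤ ρ² (φ − φ⋆)ᵀ(P ⊗ I_n)(φ − φ⋆). -/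

import Mathlib

open Matrix InnerProductSpace Kronecker

/-- One-step Lyapunov decrease from the LMI plus the quadratic constraint. -/
theorem lyapunov_decrease_of_LMI {n : ℕ}
    (A : Matrix (Fin 2) (Fin 2) ℝ) (B : Matrix (Fin 2) (Fin 1) ℝ)
    (C : Matrix (Fin 1) (Fin 2) ℝ) (D : ℝ)
    (P : Matrix (Fin 2) (Fin 2) ℝ) (hP : P.IsHermitian)
    (ρ μ lam : ℝ) (hρ : 0 < ρ) (hμ : 0 < μ) (hlam : 0 < lam)
    (hLMI : (-(fromBlocks (Aᵀ * P * A - ρ ^ 2 • P) (Aᵀ * P * B) (Bᵀ * P * A) (Bᵀ * P * B) +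
      (fromBlocks C (D • (1 : Matrix (Fin 1) (Fin 1) ℝ)) 0 (1 : Matrix (Fin 1) (Fin 1) ℝ))ᵀ *
      (fromBlocks (-lam • (1 : Matrix (Fin 1) (Fin 1) ℝ)) (1 : Matrix (Fin 1) (Fin 1) ℝ)
        (1 : Matrix (Fin 1) (Fin 1) ℝ) (-μ • (1 : Matrix (Fin 1) (Fin 1) ℝ))) *
      (fromBlocks C (D • (1 : Matrix (Fin 1) (Fin 1) ℝ)) 0 (1 : Matrix (Fin 1) (Fin 1) ℝ)))).PosSemidef)
    (φ φs : EuclideanSpace ℝ (Fin 2 × Fin n))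
    (u us : EuclideanSpace ℝ (Fin n))
    (y ys : EuclideanSpace ℝ (Fin n))
    (hy : y = fun i => (C ⊗ₖ (1 : Matrix (Fin n) (Fin n) ℝ)).mulVec φ (0, i) + D * u i)
    (hys : ys = fun i => (C ⊗ₖ (1 : Matrix (Fin n) (Fin n) ℝ)).mulVec φs (0, i) + D * us i)
    (hquad : -lam * ‖y - ys‖ ^ 2 + 2 * ⟪y - ys, u - us⟫_ℝ - μ * ‖u - us‖ ^ 2 ≥ 0)
    (hfix : (A ⊗ₖ (1 : Matrix (Fin n) (Fin n) ℝ)).mulVec φs +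
      (B ⊗ₖ (1 : Matrix (Fin n) (Fin n) ℝ)).mulVec (fun p => us p.2) = φs)
    (φp : EuclideanSpace ℝ (Fin 2 × Fin n))
    (hφp : φp = (A ⊗ₖ (1 : Matrix (Fin n) (Fin n) ℝ)).mulVec φ +
      (B ⊗ₖ (1 : Matrix (Fin n) (Fin n) ℝ)).mulVec (fun p => u p.2)) :
    (φp - φs) ⬝ᵥ (P ⊗ₖ (1 : Matrix (Fin n) (Fin n) ℝ)).mulVec (φp - φs) ≤
      ρ ^ 2 * ((φ - φs) ⬝ᵥ (P ⊗ₖ (1 : Matrix (Fin n) (Fin n) ℝ)).mulVec (φ - φs)) := by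
  -- scalar abbreviations
  set e0 : Fin n → ℝ := fun i => φ (0, i) - φs (0, i) with he0
  set e1 : Fin n → ℝ := fun i => φ (1, i) - φs (1, i) with he1
  set v : Fin n → ℝ := fun i => u i - us i with hv
  set p0 : Fin n → ℝ := fun i => A 0 0 * e0 i + A 0 1 * e1 i + B 0 0 * v i with hp0
  set p1 : Fin n → ℝ := fun i => A 1 0 * e0 i + A 1 1 * e1 i + B 1 0 * v i with hp1
  set yd : Fin n → ℝ := fun i => C 0 0 * e0 i + C 0 1 * e1 i + D * v i with hyd
  -- kronecker mulVec computations
  have hmulA : ∀ (ψ : Fin 2 × Fin n → ℝ) (j : Fin 2) (i : Fin n),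
      (A ⊗ₖ (1 : Matrix (Fin n) (Fin n) ℝ)).mulVec ψ (j, i) = A j 0 * ψ (0, i) + A j 1 * ψ (1, i) := by
    intro ψ j i
    simp [mulVec, dotProduct, Fintype.sum_prod_type, kroneckerMap_apply, one_apply,
      Fin.sum_univ_two, mul_ite, mul_comm]
  have hmulB : ∀ (w : Fin n → ℝ) (j : Fin 2) (i : Fin n),
      (B ⊗ₖ (1 : Matrix (Fin n) (Fin n) ℝ)).mulVec (fun p => w p.2) (j, i) = B j 0 * w i := by
    intro w j i
    simp [mulVec, dotProduct, Fintype.sum_prod_type, kroneckerMap_apply, one_apply,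
      Fin.sum_univ_one, mul_ite, mul_comm]
  have hmulC : ∀ (ψ : Fin 2 × Fin n → ℝ) (i : Fin n),
      (C ⊗ₖ (1 : Matrix (Fin n) (Fin n) ℝ)).mulVec ψ (0, i) = C 0 0 * ψ (0, i) + C 0 1 * ψ (1, i) := by
    intro ψ i
    simp [mulVec, dotProduct, Fintype.sum_prod_type, kroneckerMap_apply, one_apply,
      Fin.sum_univ_two, mul_ite, mul_comm]
  have hmulP : ∀ (ψ : Fin 2 × Fin n → ℝ) (j : Fin 2) (i : Fin n),
      (P ⊗ₖ (1 : Matrix (Fin n) (Fin n) ℝ)).mulVec ψ (j, i) = P j 0 * ψ (0, i) + P j 1 * ψ (1, i) := by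
    intro ψ j i
    simp [mulVec, dotProduct, Fintype.sum_prod_type, kroneckerMap_apply, one_apply,
      Fin.sum_univ_two, mul_ite, mul_comm]
  -- difference of successor states
  have hpd : ∀ (j : Fin 2) (i : Fin n), φp (j, i) - φs (j, i) =
      A j 0 * e0 i + A j 1 * e1 i + B j 0 * v i := by
    intro j i
    conv_lhs => rw [hφp, ← hfix]
    simp only [PiLp.add_apply, Pi.add_apply, hmulA, hmulB, he0, he1, hv]
    ring
  -- output differences
  have hydd : ∀ i, y i - ys i = yd i := by
    intro i
    rw [hy, hys]
    simp only [hmulC, hyd, he0, he1, hv]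
    ring
  -- quadratic form expansion
  have hquadP : ∀ (a : Fin 2 × Fin n → ℝ),
      a ⬝ᵥ (P ⊗ₖ (1 : Matrix (Fin n) (Fin n) ℝ)).mulVec a =
      ∑ i, (a (0, i) * (P 0 0 * a (0, i) + P 0 1 * a (1, i)) +
            a (1, i) * (P 1 0 * a (0, i) + P 1 1 * a (1, i))) := by
    intro a
    rw [dotProduct, Fintype.sum_prod_type_right]
    refine Finset.sum_congr rfl fun i _ => ?_
    rw [Fin.sum_univ_two, hmulP, hmulP]
  -- per-index key inequality from the LMI
  have key : ∀ i : Fin n,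
      (p0 i * (P 0 0 * p0 i + P 0 1 * p1 i) + p1 i * (P 1 0 * p0 i + P 1 1 * p1 i)) -
        ρ ^ 2 * (e0 i * (P 0 0 * e0 i + P 0 1 * e1 i) + e1 i * (P 1 0 * e0 i + P 1 1 * e1 i)) +
        (-lam * yd i ^ 2 + 2 * (yd i * v i) - μ * v i ^ 2) ≤ 0 := by
    intro i
    have h := (posSemidef_iff_dotProduct_mulVec.mp hLMI).2 (Sum.elim (fun j : Fin 2 => if j = 0 then e0 i else e1 i) (fun _ : Fin 1 => v i))
    simp [mulVec, dotProduct, Fintype.sum_sum_type, Fin.sum_univ_two, Fin.sum_univ_one,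
      fromBlocks_apply₁₁, fromBlocks_apply₁₂, fromBlocks_apply₂₁, fromBlocks_apply₂₂,
      Matrix.mul_apply, Matrix.sub_apply, Matrix.smul_apply, Matrix.one_apply,
      Matrix.transpose_apply] at h
    simp only [hp0, hp1, hyd]
    linarith [h]
  -- rewrite goal as sums
  have hL : (φp - φs) ⬝ᵥ (P ⊗ₖ (1 : Matrix (Fin n) (Fin n) ℝ)).mulVec (φp - φs) =
      ∑ i, (p0 i * (P 0 0 * p0 i + P 0 1 * p1 i) + p1 i * (P 1 0 * p0 i + P 1 1 * p1 i)) := by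
    rw [WithLp.ofLp_sub, hquadP]
    refine Finset.sum_congr rfl fun i _ => ?_
    simp only [PiLp.sub_apply, Pi.sub_apply, hpd, hp0, hp1]
  have hR : (φ - φs) ⬝ᵥ (P ⊗ₖ (1 : Matrix (Fin n) (Fin n) ℝ)).mulVec (φ - φs) =
      ∑ i, (e0 i * (P 0 0 * e0 i + P 0 1 * e1 i) + e1 i * (P 1 0 * e0 i + P 1 1 * e1 i)) := by
    rw [WithLp.ofLp_sub, hquadP]
    refine Finset.sum_congr rfl fun i _ => ?_
    simp only [PiLp.sub_apply, Pi.sub_apply, he0, he1]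
  -- rewrite the quadratic constraint as a sum
  have hny : ‖y - ys‖ ^ 2 = ∑ i, yd i ^ 2 := by
    rw [← real_inner_self_eq_norm_sq]
    simp only [PiLp.inner_apply, PiLp.sub_apply, RCLike.inner_apply, conj_trivial]
    refine Finset.sum_congr rfl fun i _ => ?_
    rw [hydd]; ring
  have hnv : ‖u - us‖ ^ 2 = ∑ i, v i ^ 2 := by
    rw [← real_inner_self_eq_norm_sq]
    simp only [PiLp.inner_apply, PiLp.sub_apply, RCLike.inner_apply, conj_trivial]
    refine Finset.sum_congr rfl fun i _ => ?_
    simp only [hv]; ring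
  have hinner : ⟪y - ys, u - us⟫_ℝ = ∑ i, yd i * v i := by
    simp only [PiLp.inner_apply, PiLp.sub_apply, RCLike.inner_apply, conj_trivial]
    refine Finset.sum_congr rfl fun i _ => ?_
    rw [hydd]; simp only [hv]; ring
  have hQ : (0:ℝ) ≤ ∑ i, (-lam * yd i ^ 2 + 2 * (yd i * v i) - μ * v i ^ 2) := by
    have : ∑ i, (-lam * yd i ^ 2 + 2 * (yd i * v i) - μ * v i ^ 2) =
        -lam * ‖y - ys‖ ^ 2 + 2 * ⟪y - ys, u - us⟫_ℝ - μ * ‖u - us‖ ^ 2 := by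
      rw [hny, hnv, hinner, Finset.mul_sum, Finset.mul_sum, Finset.mul_sum]
      rw [← Finset.sum_add_distrib, ← Finset.sum_sub_distrib]
    linarith [hquad, this.ge]
  have hsum : ∑ i, ((p0 i * (P 0 0 * p0 i + P 0 1 * p1 i) + p1 i * (P 1 0 * p0 i + P 1 1 * p1 i)) -
        ρ ^ 2 * (e0 i * (P 0 0 * e0 i + P 0 1 * e1 i) + e1 i * (P 1 0 * e0 i + P 1 1 * e1 i)) +
        (-lam * yd i ^ 2 + 2 * (yd i * v i) - μ * v i ^ 2)) ≤ 0 :=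
    Finset.sum_nonpos fun i _ => key i
  have hsplit : (∑ i, (p0 i * (P 0 0 * p0 i + P 0 1 * p1 i) + p1 i * (P 1 0 * p0 i + P 1 1 * p1 i))) -
      ρ ^ 2 * (∑ i, (e0 i * (P 0 0 * e0 i + P 0 1 * e1 i) + e1 i * (P 1 0 * e0 i + P 1 1 * e1 i))) +
      (∑ i, (-lam * yd i ^ 2 + 2 * (yd i * v i) - μ * v i ^ 2)) =
      ∑ i, ((p0 i * (P 0 0 * p0 i + P 0 1 * p1 i) + p1 i * (P 1 0 * p0 i + P 1 1 * p1 i)) -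
        ρ ^ 2 * (e0 i * (P 0 0 * e0 i + P 0 1 * e1 i) + e1 i * (P 1 0 * e0 i + P 1 1 * e1 i)) +
        (-lam * yd i ^ 2 + 2 * (yd i * v i) - μ * v i ^ 2)) := by
    rw [Finset.mul_sum, ← Finset.sum_sub_distrib, ← Finset.sum_add_distrib]
  rw [hL, hR]
  linarith [hsum, hQ, hsplit]
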